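/- The backpropagated gradient of a batch normalization layer is orthogonal to the input activation and zero-mean: for f ∈ ℝᴺ with empirical mean μ and standard deviation σ > 0, define the BN output as c₀·(f − μ𝟙)/σ + c₁𝟙. Then the Jacobian-transpose applied to any g ∈ ℝᴺ equals (c₀/σ)·P g, where P is the orthogonal projection onto the orthogonal complement of span{f, 𝟙}; in particular ⟨J g, f⟩ = 0 and ⟨J g, 𝟙⟩ = 0. -/

import Mathlib

open scoped RealInnerProductSpace

/-- Empirical mean of a vector in ℝᴺ. -/
noncomputable def bnMean {N : ℕ} (v : EuclideanSpace ℝ (Fin N)) : ℝ :=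
  (∑ i, v i) / N

/-- Empirical standard deviation of a vector in ℝᴺ. -/
noncomputable def bnStd {N : ℕ} (v : EuclideanSpace ℝ (Fin N)) : ℝ :=
  Real.sqrt ((∑ i, (v i - bnMean v) ^ 2) / N)

/-- The all-ones vector in ℝᴺ. -/
noncomputable def onesVec (N : ℕ) : EuclideanSpace ℝ (Fin N) := WithLp.toLp 2 (fun _ => 1)

/-- The batch-normalization map `BN(v) = c₀ (v − μ(v) 𝟙)/σ(v) + c₁ 𝟙`. -/
noncomputable def bn {N : ℕ} (c₀ c₁ : ℝ) (v : EuclideanSpace ℝ (Fin N)) :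
    EuclideanSpace ℝ (Fin N) :=
  c₀ • (bnStd v)⁻¹ • (v - bnMean v • onesVec N) + c₁ • onesVec N

@[simp] lemma onesVec_apply {N : ℕ} (i : Fin N) : onesVec N i = 1 := rfl

lemma inner_ones {N : ℕ} (v : EuclideanSpace ℝ (Fin N)) : ⟪onesVec N, v⟫ = ∑ i, v i := by
  simp [PiLp.inner_apply]

lemma bnMean_eq {N : ℕ} (v : EuclideanSpace ℝ (Fin N)) :
    bnMean v = (N:ℝ)⁻¹ * ⟪onesVec N, v⟫ := by
  simp [bnMean, inner_ones, div_eq_inv_mul]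

lemma bnStd_eq {N : ℕ} (v : EuclideanSpace ℝ (Fin N)) :
    bnStd v = Real.sqrt ((N:ℝ)⁻¹ *
      ⟪v - bnMean v • onesVec N, v - bnMean v • onesVec N⟫) := by
  have : ⟪v - bnMean v • onesVec N, v - bnMean v • onesVec N⟫
      = ∑ i, (v i - bnMean v) ^ 2 := by
    simp only [PiLp.inner_apply]; simp [sq]
  rw [bnStd, this, div_eq_inv_mul]


/-- The backpropagated gradient of a batch-normalization layer (transpose of its
Jacobian applied to a top-down gradient `g`) equals `(c₀/σ) P g`, where `P` is the
orthogonal projection onto the orthogonal complement of `span {f, 𝟙}`; in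
particular it is orthogonal to `f` and zero-mean. -/
theorem bn_backprop {N : ℕ} (hN : 0 < N)
    (f : EuclideanSpace ℝ (Fin N)) (c₀ c₁ : ℝ)
    (hσ : 0 < bnStd f)
    (J : EuclideanSpace ℝ (Fin N) →L[ℝ] EuclideanSpace ℝ (Fin N))
    (hJ : J = ContinuousLinearMap.adjoint (fderiv ℝ (bn c₀ c₁) f)) :
    ∀ g : EuclideanSpace ℝ (Fin N),
      J g = (c₀ / bnStd f) •
          (Submodule.orthogonalProjection ((Submodule.span ℝ {f, onesVec N})ᗮ) g :
            EuclideanSpace ℝ (Fin N)) ∧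
        ⟪J g, f⟫ = 0 ∧ ⟪J g, onesVec N⟫ = 0 := by
  classical
  set σ : ℝ := bnStd f with hσdef
  set q : EuclideanSpace ℝ (Fin N) := f - bnMean f • onesVec N with hqdef
  have hNR : (N:ℝ) ≠ 0 := Nat.cast_ne_zero.mpr hN.ne'
  have hσne : σ ≠ 0 := ne_of_gt hσ
  -- inner product facts
  have h11 : ⟪onesVec N, onesVec N⟫ = (N:ℝ) := by
    rw [inner_ones]; simp
  have h1q : ⟪onesVec N, q⟫ = 0 := by
    rw [hqdef, inner_sub_right, real_inner_smul_right, h11, bnMean_eq]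
    field_simp; ring
  have hq1 : ⟪q, onesVec N⟫ = 0 := by rw [real_inner_comm]; exact h1q
  have hval : σ ^ 2 = (N:ℝ)⁻¹ * ⟪q, q⟫ := by
    rw [hσdef, bnStd_eq]
    exact Real.sq_sqrt (mul_nonneg (by positivity) real_inner_self_nonneg)
  have hqq : ⟪q, q⟫ = (N:ℝ) * σ ^ 2 := by
    rw [hval]; field_simp
  have hqqne : ⟪q, q⟫ ≠ 0 := by
    rw [hqq]
    have : (0:ℝ) < (N:ℝ) := by exact_mod_cast hN
    positivity
  have hvalne : (N:ℝ)⁻¹ * ⟪q, q⟫ ≠ 0 := by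
    rw [← hval]; positivity
  -- CLM building blocks
  set M : EuclideanSpace ℝ (Fin N) →L[ℝ] ℝ := (N:ℝ)⁻¹ • innerSL ℝ (onesVec N) with hM
  set Q : EuclideanSpace ℝ (Fin N) →L[ℝ] EuclideanSpace ℝ (Fin N) := ContinuousLinearMap.id ℝ _ - M.smulRight (onesVec N) with hQ
  have hQapp : ∀ v : EuclideanSpace ℝ (Fin N), Q v = v - bnMean v • onesVec N := by
    intro v
    simp [hQ, hM, bnMean_eq, inner_ones]
  have hQfun : (fun v : EuclideanSpace ℝ (Fin N) => v - bnMean v • onesVec N) = Q := by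
    funext v; exact (hQapp v).symm
  have hQder : HasFDerivAt (fun v : EuclideanSpace ℝ (Fin N) => v - bnMean v • onesVec N) Q f := by
    rw [hQfun]; exact Q.hasFDerivAt
  -- derivative of the inner-product function
  have hinner := hQder.inner ℝ hQder
  have hVder := hinner.const_mul ((N:ℝ)⁻¹)
  -- derivative of bnStd
  have hstdfun : (bnStd : EuclideanSpace ℝ (Fin N) → ℝ) = fun v =>
      Real.sqrt ((N:ℝ)⁻¹ * ⟪v - bnMean v • onesVec N, v - bnMean v • onesVec N⟫) := by
    funext v; exact bnStd_eq v
  have hstd : HasFDerivAt (bnStd : EuclideanSpace ℝ (Fin N) → ℝ)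
      ((1 / (2 * Real.sqrt ((N:ℝ)⁻¹ * ⟪q, q⟫))) •
        ((N:ℝ)⁻¹ • ((fderivInnerCLM ℝ (q, q)).comp (Q.prod Q)))) f := by
    rw [hstdfun]
    exact hVder.sqrt hvalne
  have hinv : HasFDerivAt (fun v : EuclideanSpace ℝ (Fin N) => (bnStd v)⁻¹)
      ((-(σ ^ 2)⁻¹) • ((1 / (2 * Real.sqrt ((N:ℝ)⁻¹ * ⟪q, q⟫))) •
        ((N:ℝ)⁻¹ • ((fderivInnerCLM ℝ (q, q)).comp (Q.prod Q))))) f :=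
    (hasDerivAt_inv hσne).comp_hasFDerivAt f hstd
  have hsmul := hinv.smul hQder
  have hbn' : HasFDerivAt (bn c₀ c₁) _ f := (hsmul.const_smul c₀).add_const (c₁ • onesVec N)
  have hfd := hbn'.fderiv
  have hsqrtσ : Real.sqrt ((N:ℝ)⁻¹ * ⟪q, q⟫) = σ := (bnStd_eq f).symm
  have happ : ∀ h : EuclideanSpace ℝ (Fin N), fderiv ℝ (bn c₀ c₁) f h
      = (c₀ / σ) • (h - ((N:ℝ)⁻¹ * ⟪onesVec N, h⟫) • onesVec N
          - (⟪q, h⟫ / ⟪q, q⟫) • q) := by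
    intro h
    rw [hfd]
    simp only [ContinuousLinearMap.add_apply, ContinuousLinearMap.coe_smul',
      Pi.smul_apply, ContinuousLinearMap.smulRight_apply, ContinuousLinearMap.comp_apply,
      ContinuousLinearMap.prod_apply, fderivInnerCLM_apply, ContinuousLinearMap.coe_sub',
      Pi.sub_apply, ContinuousLinearMap.id_apply, innerSL_apply_apply, ContinuousLinearMap.smul_apply,
      hsqrtσ]
    rw [hQapp h, ← hqdef]
    have e1 : ⟪q, h - bnMean h • onesVec N⟫ = ⟪q, h⟫ := by
      rw [inner_sub_right, real_inner_smul_right, hq1]; ring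
    have e2 : ⟪h - bnMean h • onesVec N, q⟫ = ⟪q, h⟫ := by
      rw [real_inner_comm]; exact e1
    rw [e1, e2, bnMean_eq h, hqq, ← hσdef]
    match_scalars
    · field_simp
    · simp only [smul_eq_mul]; field_simp; ring
    · simp only [smul_eq_mul]; field_simp; ring
  have hsym : ∀ x y : EuclideanSpace ℝ (Fin N),
      ⟪fderiv ℝ (bn c₀ c₁) f x, y⟫ = ⟪x, fderiv ℝ (bn c₀ c₁) f y⟫ := by
    intro x y
    rw [happ x, happ y]
    simp only [real_inner_smul_left, real_inner_smul_right, inner_sub_left, inner_sub_right]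
    rw [real_inner_comm (onesVec N) x, real_inner_comm q x]
    ring
  have hself : fderiv ℝ (bn c₀ c₁) f = ContinuousLinearMap.adjoint (fderiv ℝ (bn c₀ c₁) f) :=
    (ContinuousLinearMap.eq_adjoint_iff _ _).2 hsym
  intro g
  set p : EuclideanSpace ℝ (Fin N) :=
    g - ((N:ℝ)⁻¹ * ⟪onesVec N, g⟫) • onesVec N - (⟪q, g⟫ / ⟪q, q⟫) • q with hp
  have hJg : J g = (c₀ / σ) • p := by rw [hJ, ← hself, happ g]
  have hfspan : f ∈ Submodule.span ℝ {f, onesVec N} := Submodule.subset_span (by simp)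
  have h1span : onesVec N ∈ Submodule.span ℝ {f, onesVec N} := Submodule.subset_span (by simp)
  have hqspan : q ∈ Submodule.span ℝ {f, onesVec N} := by
    rw [hqdef]
    exact Submodule.sub_mem _ hfspan (Submodule.smul_mem _ _ h1span)
  have hp1 : ⟪onesVec N, p⟫ = 0 := by
    rw [hp]
    simp only [inner_sub_right, real_inner_smul_right, h11, h1q]
    field_simp; ring
  have hpq : ⟪q, p⟫ = 0 := by
    rw [hp]
    simp only [inner_sub_right, real_inner_smul_right, hq1, mul_zero, sub_zero]
    rw [div_mul_cancel₀ _ hqqne, sub_self]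
  have hpf : ⟪f, p⟫ = 0 := by
    have hf : f = q + bnMean f • onesVec N := by rw [hqdef]; abel
    rw [hf, inner_add_left, real_inner_smul_left, hpq, hp1]; ring
  have hpmem : p ∈ (Submodule.span ℝ {f, onesVec N})ᗮ := by
    rw [Submodule.mem_orthogonal]
    intro u hu
    induction hu using Submodule.span_induction with
    | mem x hx =>
      rcases hx with h | h
      · rw [h]; exact hpf
      · rw [h]; exact hp1
    | zero => exact inner_zero_left p
    | add x y hx hy ihx ihy => rw [inner_add_left, ihx, ihy]; ring
    | smul a x hx ihx => rw [real_inner_smul_left, ihx]; ring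
  have hgp : g - p ∈ ((Submodule.span ℝ {f, onesVec N})ᗮ)ᗮ := by
    apply Submodule.le_orthogonal_orthogonal
    have hgps : g - p = ((N:ℝ)⁻¹ * ⟪onesVec N, g⟫) • onesVec N + (⟪q, g⟫ / ⟪q, q⟫) • q := by
      rw [hp]; abel
    rw [hgps]
    exact Submodule.add_mem _ (Submodule.smul_mem _ _ h1span) (Submodule.smul_mem _ _ hqspan)
  have hproj : ((Submodule.orthogonalProjection ((Submodule.span ℝ {f, onesVec N})ᗮ) g :
      EuclideanSpace ℝ (Fin N))) = p :=
    Submodule.eq_starProjection_of_mem_orthogonal hpmem hgp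
  refine ⟨?_, ?_, ?_⟩
  · rw [hJg, hproj]
  · rw [hJg, real_inner_smul_left, real_inner_comm f p, hpf, mul_zero]
  · rw [hJg, real_inner_smul_left, real_inner_comm (onesVec N) p, hp1, mul_zero]
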